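/- Let R be a commutative ring and t ∈ R. Let Γ be the subgroup of SL_3(R) generated by the three elementary matrices e_{12}(t), e_{23}(t), e_{31}(t). Then for every integer β ≥ 1: if β ≡ 1 (mod 3) then e_{12}(t^β), e_{23}(t^β), e_{31}(t^β) all belong to Γ; and if β ≡ 2 (mod 3) then e_{13}(t^β), e_{21}(t^β), e_{32}(t^β) all belong to Γ. -/

import Mathlib

open Matrix

/-- The 3×3 elementary (transvection) matrix `e_{ij}(α) = I + α·E_{ij}`. -/
def elemMat {R : Type*} [CommRing R] (i j : Fin 3) (α : R) : Matrix (Fin 3) (Fin 3) R :=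
  1 + Matrix.single i j α

theorem elemMat_det {R : Type*} [CommRing R] (i j : Fin 3) (hij : i ≠ j) (α : R) :
    (elemMat i j α).det = 1 := by
  fin_cases i <;> fin_cases j <;>
    simp_all [elemMat, Matrix.det_fin_three, Matrix.single, Matrix.one_apply]

/-- The elementary matrix `e_{ij}(α)` as an element of `SL₃(R)` (for `i ≠ j`). -/
def elemSL {R : Type*} [CommRing R] (i j : Fin 3) (hij : i ≠ j) (α : R) :
    Matrix.SpecialLinearGroup (Fin 3) R :=
  ⟨elemMat i j α, elemMat_det i j hij α⟩

/-- The subgroup of `SL₃(R)` generated by `e_{12}(t)`, `e_{23}(t)` and `e_{31}(t)`. -/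
def elemSubgroup (R : Type*) [CommRing R] (t : R) :
    Subgroup (Matrix.SpecialLinearGroup (Fin 3) R) :=
  Subgroup.closure
    {elemSL 0 1 (by decide) t, elemSL 1 2 (by decide) t, elemSL 2 0 (by decide) t}

lemma elemSL_rel {R : Type*} [CommRing R] (i j k : Fin 3) (hij : i ≠ j) (hjk : j ≠ k)
    (hik : i ≠ k) (a b : R) :
    elemSL i j hij a * elemSL j k hjk b =
      elemSL i k hik (a * b) * (elemSL j k hjk b * elemSL i j hij a) := by
  apply Subtype.ext
  show elemMat i j a * elemMat j k b = elemMat i k (a * b) * (elemMat j k b * elemMat i j a)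
  simp only [elemMat, mul_add, add_mul, one_mul, mul_one,
    Matrix.single_mul_single_same,
    Matrix.single_mul_single_of_ne i k j hjk.symm b (c := a * b),
    Matrix.single_mul_single_of_ne i k i hik.symm a (c := a * b),
    Matrix.single_mul_single_of_ne j k i hik.symm a (c := b),
    mul_zero, zero_mul, add_zero]
  abel

lemma elemSL_comm_mem {R : Type*} [CommRing R] {t : R} (i j k : Fin 3) (hij : i ≠ j)
    (hjk : j ≠ k) (hik : i ≠ k) {a b : R}
    (ha : elemSL i j hij a ∈ elemSubgroup R t) (hb : elemSL j k hjk b ∈ elemSubgroup R t) :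
    elemSL i k hik (a * b) ∈ elemSubgroup R t := by
  have h := elemSL_rel i j k hij hjk hik a b
  have : elemSL i k hik (a * b) =
      elemSL i j hij a * elemSL j k hjk b * (elemSL j k hjk b * elemSL i j hij a)⁻¹ := by
    rw [h]; group
  rw [this]
  exact mul_mem (mul_mem ha hb) (inv_mem (mul_mem hb ha))

lemma gen_mem {R : Type*} [CommRing R] (t : R) :
    elemSL 0 1 (by decide) t ∈ elemSubgroup R t ∧
    elemSL 1 2 (by decide) t ∈ elemSubgroup R t ∧
    elemSL 2 0 (by decide) t ∈ elemSubgroup R t := by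
  refine ⟨?_, ?_, ?_⟩ <;> apply Subgroup.subset_closure <;> simp [Set.mem_insert_iff]

theorem elem_pow_mem_elemSubgroup {R : Type*} [CommRing R] (t : R) (β : ℕ) (hβ : 1 ≤ β) :
    (β % 3 = 1 →
      elemSL 0 1 (by decide) (t ^ β) ∈ elemSubgroup R t ∧
      elemSL 1 2 (by decide) (t ^ β) ∈ elemSubgroup R t ∧
      elemSL 2 0 (by decide) (t ^ β) ∈ elemSubgroup R t) ∧
    (β % 3 = 2 →
      elemSL 0 2 (by decide) (t ^ β) ∈ elemSubgroup R t ∧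
      elemSL 1 0 (by decide) (t ^ β) ∈ elemSubgroup R t ∧
      elemSL 2 1 (by decide) (t ^ β) ∈ elemSubgroup R t) := by
  induction β using Nat.strong_induction_on with
  | _ β IH =>
  obtain ⟨g01, g12, g20⟩ := gen_mem t
  match β, hβ with
  | 1, _ =>
    constructor
    · intro _
      simpa using ⟨g01, g12, g20⟩
    · intro h; simp at h
  | 2, _ =>
    constructor
    · intro h; simp at h
    · intro _
      refine ⟨?_, ?_, ?_⟩
      · simpa [pow_two] using elemSL_comm_mem 0 1 2 (by decide) (by decide) (by decide) g01 g12
      · simpa [pow_two] using elemSL_comm_mem 1 2 0 (by decide) (by decide) (by decide) g12 g20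
      · simpa [pow_two] using elemSL_comm_mem 2 0 1 (by decide) (by decide) (by decide) g20 g01
  | (n+3), _ =>
    have hn1 : 1 ≤ n + 1 := by omega
    have hn2 : 1 ≤ n + 2 := by omega
    have IH2 := IH (n + 2) (by omega) hn2
    have IH1 := IH (n + 1) (by omega) hn1
    have e3 : t ^ (n + 3) = t ^ (n + 1) * t ^ 2 := by ring
    have e3' : t ^ (n + 3) = t ^ (n + 2) * t := by ring
    constructor
    · intro h
      have h1 : (n + 1) % 3 = 2 := by omega
      obtain ⟨a02, a10, a21⟩ := IH1.2 h1
      obtain ⟨b02, b10, b21⟩ := (IH 2 (by omega) (by norm_num)).2 rfl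
      rw [e3]
      exact ⟨elemSL_comm_mem 0 2 1 (by decide) (by decide) (by decide) a02 b21,
        elemSL_comm_mem 1 0 2 (by decide) (by decide) (by decide) a10 b02,
        elemSL_comm_mem 2 1 0 (by decide) (by decide) (by decide) a21 b10⟩
    · intro h
      have h1 : (n + 2) % 3 = 1 := by omega
      obtain ⟨a01, a12, a20⟩ := IH2.1 h1
      rw [e3']
      exact ⟨elemSL_comm_mem 0 1 2 (by decide) (by decide) (by decide) a01 g12,
        elemSL_comm_mem 1 2 0 (by decide) (by decide) (by decide) a12 g20,
        elemSL_comm_mem 2 0 1 (by decide) (by decide) (by decide) a20 g01⟩
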